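/- Let c > 0 be real and let (K_L) be a sequence of integers with K_L ≥ 2 and K_L/L → c as L → ∞. Then the equilibrium proposer payoff Π_P(K_L, L) = (1 − s*(K_L,L))·(1 − (1 − 1/K_L)^L) converges to 1 − (c + 1)/(c·e^{1/c}), and the equilibrium responder payoff Π_R(K_L, L) = s*(K_L,L)·(K_L/L)·(1 − (1 − 1/K_L)^L) converges to e^{−1/c}, as L → ∞. -/

import Mathlib

/-- The subgame-perfect Nash equilibrium offer of the Multi-Proposer-Multi-Responder
Ultimatum Game with `K` proposers and `L` responders. -/
noncomputable def sstar (K L : ℕ) : ℝ :=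
  ((L:ℝ) * ((K:ℝ) - 1)^L) /
    ((K:ℝ)^(L+1) - ((K:ℝ) - 1)^(L-1) * (((K:ℝ) - 1) * (K:ℝ) + (L:ℝ)))

/-- Equilibrium expected payoff of a proposer. -/
noncomputable def PiP (K L : ℕ) : ℝ :=
  (1 - sstar K L) * (1 - (1 - 1/(K:ℝ))^L)

/-- Equilibrium expected payoff of a responder. -/
noncomputable def PiR (K L : ℕ) : ℝ :=
  sstar K L * ((K:ℝ) / (L:ℝ)) * (1 - (1 - 1/(K:ℝ))^L)

lemma key_identity (Kn m : ℕ) (hK : 2 ≤ Kn) :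
    sstar Kn (m+1) * ((Kn:ℝ)/((m+1:ℕ):ℝ)) =
      (1 - 1/(Kn:ℝ))^(m+1) /
        (1 - (1 - 1/(Kn:ℝ))^(m+1)
          - (1 - 1/(Kn:ℝ))^(m+1) * (((m+1:ℕ):ℝ)/((Kn:ℝ)*((Kn:ℝ)-1)))) := by
  set x : ℝ := (Kn:ℝ) with hxdef
  have hx2 : (2:ℝ) ≤ x := by rw [hxdef]; exact_mod_cast hK
  have hx0 : x ≠ 0 := by linarith
  have hx1 : x - 1 ≠ 0 := by linarith
  have hn0 : ((m+1:ℕ):ℝ) ≠ 0 := by positivity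
  set n : ℝ := ((m+1:ℕ):ℝ) with hndef
  have hbase : 1 - 1/x = (x-1)/x := by field_simp
  set A : ℝ := x * (x-1)^(m+1) with hA
  set D : ℝ := x^(m+2) - (x-1)^m * ((x-1)*x + n) with hD
  set M : ℝ := x^(m+2) * (x-1) with hM
  have hM0 : M ≠ 0 := by
    apply mul_ne_zero (pow_ne_zero _ hx0) hx1
  have hr : (1 - 1/x)^(m+1) = ((x-1)*A) / M := by
    rw [hbase, div_pow, hA, hM]
    rw [show (x-1) * (x * (x-1)^(m+1)) = (x-1)^(m+1) * (x * (x-1)) by ring,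
        show x^(m+2) * (x-1) = x^(m+1) * (x * (x-1)) by ring]
    rw [mul_div_mul_right _ _ (mul_ne_zero hx0 hx1)]
  have hE : 1 - (1 - 1/x)^(m+1) - (1 - 1/x)^(m+1) * (n/(x*(x-1)))
      = ((x-1)*D) / M := by
    rw [hbase, div_pow, hD, hM]
    field_simp
    ring
  have hL : sstar Kn (m+1) = (n * (x-1)^(m+1)) / D := by
    unfold sstar
    simp only [Nat.add_sub_cancel]
    rfl
  rw [hL, hE, hr, div_div_div_cancel_right₀ hM0, mul_div_mul_left _ _ hx1,
      div_mul_div_comm,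
      show n * (x-1)^(m+1) * x = A * n by rw [hA]; ring]
  rw [mul_comm D n, mul_comm A n, mul_div_mul_left _ _ hn0]

theorem stmt18 (c : ℝ) (hc : 0 < c) (K : ℕ → ℕ) (hK : ∀ L, 2 ≤ K L)
    (hlim : Filter.Tendsto (fun L : ℕ => (K L : ℝ) / (L:ℝ)) Filter.atTop (nhds c)) :
    Filter.Tendsto (fun L : ℕ => PiP (K L) L) Filter.atTop
      (nhds (1 - (c + 1) / (c * Real.exp (1/c)))) ∧
    Filter.Tendsto (fun L : ℕ => PiR (K L) L) Filter.atTop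
      (nhds (Real.exp (-(1/c)))) := by
  classical
  open Filter Real in
  have hKcast : ∀ L, (2:ℝ) ≤ (K L : ℝ) := fun L => by exact_mod_cast hK L
  have hK0 : ∀ L, ((K L : ℕ):ℝ) ≠ 0 := fun L => by have := hKcast L; linarith
  have hK1 : ∀ L, ((K L : ℕ):ℝ) - 1 ≠ 0 := fun L => by have := hKcast L; linarith
  -- K L → ∞
  have hKtop : Tendsto (fun L : ℕ => ((K L : ℕ):ℝ)) atTop atTop := by
    have h1 : Tendsto (fun L : ℕ => ((K L : ℕ):ℝ)/(L:ℝ) * (L:ℝ)) atTop atTop :=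
      hlim.pos_mul_atTop hc tendsto_natCast_atTop_atTop
    refine h1.congr' ?_
    filter_upwards [eventually_ge_atTop 1] with L hL
    have : ((L:ℕ):ℝ) ≠ 0 := by positivity
    field_simp
  -- L / K L → 1/c
  have hinv : Tendsto (fun L : ℕ => (L:ℝ)/((K L : ℕ):ℝ)) atTop (nhds (1/c)) := by
    have := hlim.inv₀ hc.ne'
    simpa [one_div] using this.congr fun L => by rw [inv_div]
  -- K L * log (1 - 1/K L) → -1
  have hKlog : Tendsto (fun L : ℕ => ((K L:ℕ):ℝ) * Real.log (1 - 1/((K L:ℕ):ℝ)))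
      atTop (nhds (-1)) := by
    have h := (Real.tendsto_mul_log_one_add_div_atTop (-1)).comp hKtop
    refine h.congr fun L => ?_
    simp [Function.comp, neg_div, sub_eq_add_neg]
  -- L * log (1 - 1/K L) → -(1/c)
  have hLlog : Tendsto (fun L : ℕ => (L:ℝ) * Real.log (1 - 1/((K L:ℕ):ℝ)))
      atTop (nhds (-(1/c))) := by
    have h := hinv.mul hKlog
    have h2 : (1/c) * (-1) = -(1/c) := by ring
    rw [h2] at h
    refine h.congr fun L => ?_
    have h0 := hK0 L
    field_simp
  -- r L := (1 - 1/K L)^L → exp (-(1/c))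
  have hpos : ∀ L, (0:ℝ) < 1 - 1/((K L:ℕ):ℝ) := by
    intro L
    have h2 := hKcast L
    have : 1/((K L:ℕ):ℝ) ≤ 1/2 := by
      apply one_div_le_one_div_of_le <;> linarith
    linarith
  have hr : Tendsto (fun L : ℕ => (1 - 1/((K L:ℕ):ℝ))^L) atTop
      (nhds (Real.exp (-(1/c)))) := by
    have h := (Real.continuous_exp.tendsto _).comp hLlog
    refine h.congr fun L => ?_
    simp only [Function.comp]
    rw [Real.exp_nat_mul, Real.exp_log (hpos L)]
  -- t L := L/(K L * (K L - 1)) → 0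
  have ht : Tendsto (fun L : ℕ => (L:ℝ)/(((K L:ℕ):ℝ) * (((K L:ℕ):ℝ) - 1)))
      atTop (nhds 0) := by
    have h1 : Tendsto (fun L : ℕ => (((K L:ℕ):ℝ) - 1)⁻¹) atTop (nhds 0) :=
      tendsto_inv_atTop_zero.comp (tendsto_atTop_add_const_right _ (-1) hKtop
        |>.congr fun L => by ring_nf)
    have h := hinv.mul h1
    rw [mul_zero] at h
    refine h.congr fun L => ?_
    rw [← div_div, div_eq_mul_inv ((L:ℝ)/_)]
  set e : ℝ := Real.exp (-(1/c)) with he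
  have he1 : e < 1 := by
    rw [he]
    apply Real.exp_lt_one_iff.mpr
    simp [one_div, hc, inv_pos]
  have hepos : 0 < e := Real.exp_pos _
  have hne : 1 - e ≠ 0 := by linarith
  -- denominator
  have hd : Tendsto (fun L : ℕ => 1 - (1 - 1/((K L:ℕ):ℝ))^L
      - (1 - 1/((K L:ℕ):ℝ))^L * ((L:ℝ)/(((K L:ℕ):ℝ) * (((K L:ℕ):ℝ) - 1))))
      atTop (nhds (1 - e)) := by
    have h := (((tendsto_const_nhds : Tendsto (fun _ : ℕ => (1:ℝ)) atTop (nhds 1))).sub hr).sub (hr.mul ht)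
    simpa using h
  -- g = sstar * (K/L) → e/(1-e)
  have hg : Tendsto (fun L : ℕ => sstar (K L) L * (((K L:ℕ):ℝ)/(L:ℝ)))
      atTop (nhds (e/(1-e))) := by
    have h := hr.div hd hne
    refine h.congr' ?_
    filter_upwards [eventually_ge_atTop 1] with L hL
    obtain ⟨m, rfl⟩ : ∃ m, L = m + 1 := ⟨L - 1, (Nat.succ_pred_eq_of_pos hL).symm⟩
    exact (key_identity (K (m+1)) m (hK _)).symm
  -- sstar → (e/(1-e)) * (1/c)
  have hs : Tendsto (fun L : ℕ => sstar (K L) L) atTop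
      (nhds ((e/(1-e)) * (1/c))) := by
    have h := hg.mul hinv
    refine h.congr' ?_
    filter_upwards [eventually_ge_atTop 1] with L hL
    have hL0 : ((L:ℕ):ℝ) ≠ 0 := by positivity
    have hk0 := hK0 L
    have honed : (((K L:ℕ):ℝ)/(L:ℝ)) * ((L:ℝ)/((K L:ℕ):ℝ)) = 1 := by
      field_simp
    rw [mul_assoc, honed, mul_one]
  constructor
  · -- PiP
    have h := (((tendsto_const_nhds : Tendsto (fun _ : ℕ => (1:ℝ)) atTop (nhds 1))).sub hs).mul (((tendsto_const_nhds : Tendsto (fun _ : ℕ => (1:ℝ)) atTop (nhds 1))).sub hr)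
    have heq : (1 - (e/(1-e)) * (1/c)) * (1 - e)
        = 1 - (c + 1) / (c * Real.exp (1/c)) := by
      have hcne : c ≠ 0 := hc.ne'
      have hee : Real.exp (1/c) = e⁻¹ := by
        rw [he, ← Real.exp_neg, neg_neg]
      rw [hee]
      field_simp
      ring
    rw [heq] at h
    exact h.congr fun L => rfl
  · -- PiR
    have h := hg.mul (((tendsto_const_nhds : Tendsto (fun _ : ℕ => (1:ℝ)) atTop (nhds 1))).sub hr)
    have heq : (e/(1-e)) * (1 - e) = e := div_mul_cancel₀ _ hne
    rw [heq] at h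
    exact h.congr fun L => rfl
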